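/- Let H be a real inner product space, let f : H → ℝ be differentiable with gradient ∇f satisfying the L-smoothness inequality f(v) ≤ f(w) + ⟨v − w, ∇f(w)⟩ + (L/2)‖v − w‖² for all v, w ∈ H, where L ≥ μ > 0, and let δ* ∈ H satisfy ∇f(δ*) = 0. Let E ≥ 1 be a natural number, B ≥ 0, set ξ = L/μ, λ = max{8L/μ, E} − 1, and α_t = 2/(μ(λ + t)) for integers t ≥ 1. Let (x_t)_{t ≥ 1} be a sequence in H such that Δ_t = ‖x_t − δ*‖² satisfies Δ_{t+1} ≤ (1 − α_t μ) Δ_t + α_t² B for all t ≥ 1. Then for every t ≥ 1, f(x_t) − f(δ*) ≤ (ξ/(λ + t)) · (2B/μ + (μ(λ + 1)/2) ‖x_1 − δ*‖²). -/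

import Mathlib

open InnerProductSpace
open scoped RealInnerProductSpace

/-- Convergence theorem for trigger training: if `f` is `L`-smooth with critical
point `δ*`, and the iterates `x t` satisfy the one-step recursion
`‖x_{t+1} − δ*‖² ≤ (1 − α_t μ)‖x_t − δ*‖² + α_t² B` with `α_t = 2/(μ(λ + t))`
and `λ = max{8L/μ, E} − 1`, then
`f(x_t) − f(δ*) ≤ (ξ/(λ + t))(2B/μ + (μ(λ+1)/2)‖x_1 − δ*‖²)` where `ξ = L/μ`. -/
theorem trigger_convergence {H : Type*} [NormedAddCommGroup H] [InnerProductSpace ℝ H]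
    (f : H → ℝ) (g : H → H) (L μ : ℝ) (hμ : 0 < μ) (hLμ : μ ≤ L)
    (hgrad : ∀ x : H, HasFDerivAt f ((toDualMap ℝ H) (g x) : H →L[ℝ] ℝ) x)
    (hsmooth : ∀ v u : H, f v ≤ f u + ⟪v - u, g u⟫ + (L / 2) * ‖v - u‖ ^ 2)
    (δstar : H) (hcrit : g δstar = 0)
    (E : ℕ) (hE : 1 ≤ E) (B : ℝ) (hB : 0 ≤ B)
    (lam : ℝ) (hlam : lam = max (8 * L / μ) (E : ℝ) - 1)
    (α : ℕ → ℝ) (hα : ∀ t : ℕ, α t = 2 / (μ * (lam + (t : ℝ))))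
    (x : ℕ → H)
    (hrec : ∀ t : ℕ, 1 ≤ t →
      ‖x (t + 1) - δstar‖ ^ 2 ≤ (1 - α t * μ) * ‖x t - δstar‖ ^ 2 + (α t) ^ 2 * B) :
    ∀ t : ℕ, 1 ≤ t →
      f (x t) - f δstar ≤
        (L / μ) / (lam + (t : ℝ)) * (2 * B / μ + (μ * (lam + 1) / 2) * ‖x 1 - δstar‖ ^ 2) := by
  have hμ' : μ ≠ 0 := ne_of_gt hμ
  have hL0 : 0 < L := lt_of_lt_of_le hμ hLμ
  have hlam7 : (7 : ℝ) ≤ lam := by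
    have h1 : (1:ℝ) ≤ L / μ := (one_le_div hμ).2 hLμ
    have h8 : (8:ℝ) ≤ 8 * L / μ := by
      have : 8 * L / μ = 8 * (L / μ) := by ring
      rw [this]; linarith
    have := le_max_left (8 * L / μ) (E : ℝ)
    rw [hlam]; linarith
  set c : ℝ := 4 * B / μ ^ 2 with hc
  have hc0 : 0 ≤ c := by positivity
  set v : ℝ := c + (lam + 1) * ‖x 1 - δstar‖ ^ 2 with hv
  have hv0 : 0 ≤ v := by positivity
  have hcv : c ≤ v := by nlinarith [sq_nonneg ‖x 1 - δstar‖]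
  -- key: ‖x t - δstar‖² ≤ v / (lam + t)
  have key : ∀ t : ℕ, 1 ≤ t → ‖x t - δstar‖ ^ 2 ≤ v / (lam + (t : ℝ)) := by
    intro t ht
    induction t, ht using Nat.le_induction with
    | base =>
      rw [le_div_iff₀ (by push_cast; linarith)]
      push_cast
      nlinarith [sq_nonneg ‖x 1 - δstar‖]
    | succ t ht ih =>
      have hs : (8:ℝ) ≤ lam + t := by
        have : (1:ℝ) ≤ (t:ℝ) := by exact_mod_cast ht
        linarith
      set s : ℝ := lam + (t : ℝ) with hsdef
      have hs0 : 0 < s := by linarith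
      have hαt : α t = 2 / (μ * s) := hα t
      have hαμ : α t * μ = 2 / s := by
        rw [hαt]; field_simp
      have hα2 : (α t) ^ 2 * B = c / s ^ 2 := by
        rw [hαt, hc]; field_simp; ring
      have h1 : (0:ℝ) ≤ 1 - 2 / s := by
        have : 2 / s ≤ 2 / 8 := by
          apply div_le_div_of_nonneg_left (by norm_num) (by norm_num) hs
        linarith
      have step := hrec t ht
      rw [hαμ, hα2] at step
      have h2 : (1 - 2 / s) * ‖x t - δstar‖ ^ 2 ≤ (1 - 2 / s) * (v / s) :=
        mul_le_mul_of_nonneg_left ih h1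
      have h3 : (1 - 2 / s) * (v / s) + c / s ^ 2 = ((s - 2) * v + c) / s ^ 2 := by
        field_simp
      have h4 : ((s - 2) * v + c) / s ^ 2 ≤ v / (s + 1) := by
        rw [div_le_div_iff₀ (by positivity) (by linarith)]
        have h5 : (s + 1) * c ≤ (s + 1) * v :=
          mul_le_mul_of_nonneg_left hcv (by linarith)
        nlinarith
      have : ‖x (t + 1) - δstar‖ ^ 2 ≤ v / (s + 1) := by
        calc ‖x (t + 1) - δstar‖ ^ 2 ≤ (1 - 2 / s) * ‖x t - δstar‖ ^ 2 + c / s ^ 2 := step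
          _ ≤ (1 - 2 / s) * (v / s) + c / s ^ 2 := by linarith
          _ = ((s - 2) * v + c) / s ^ 2 := h3
          _ ≤ v / (s + 1) := h4
      have hcast : lam + ((t + 1 : ℕ) : ℝ) = s + 1 := by push_cast; ring
      rw [hcast]; exact this
  intro t ht
  have hsm := hsmooth (x t) δstar
  rw [hcrit, inner_zero_right] at hsm
  have hDt := key t ht
  have hst : (8:ℝ) ≤ lam + t := by
    have : (1:ℝ) ≤ (t:ℝ) := by exact_mod_cast ht
    linarith
  have hst0 : (0:ℝ) < lam + t := by linarith
  have heq : (L / μ) / (lam + (t : ℝ)) * (2 * B / μ + (μ * (lam + 1) / 2) * ‖x 1 - δstar‖ ^ 2)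
      = L / 2 * (v / (lam + (t : ℝ))) := by
    rw [hv, hc]; field_simp; ring
  rw [heq]
  have : L / 2 * ‖x t - δstar‖ ^ 2 ≤ L / 2 * (v / (lam + (t : ℝ))) :=
    mul_le_mul_of_nonneg_left hDt (by linarith)
  linarith
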